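/- Let D ⊆ ℝ^d be closed, N ≥ 1, and for each ℓ = 0,…,N−1 let Ψ^ℓ be a finite set of continuous real-valued functions on D such that span Ψ^ℓ ⊆ span Ψ^{ℓ+1} for ℓ = 0,…,N−2 and each Ψ^ℓ is locally linearly independent. Let D = Ω^0 ⊇ Ω^1 ⊇ … ⊇ Ω^{N−1} be closed subsets. For 0 ≤ ℓ ≤ N−1 define the intermediate hierarchical set H^ℓ := {(m,ψ) : 0 ≤ m ≤ ℓ, ψ ∈ Ψ^m, supp ψ ⊆ Ω^m, and (supp ψ ⊄ Ω^{m+1} if m < ℓ, while supp ψ ≠ ∅ if m = ℓ)}. Then the intermediate spline spaces are nested: span{ψ : (m,ψ) ∈ H^ℓ} ⊆ span{ψ : (m,ψ) ∈ H^{ℓ+1}} for all ℓ = 0,…,N−2. -/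

import Mathlib

noncomputable section
open Set

namespace Hier

/-- The support of a function `ψ` defined on `D ⊆ ℝ^d`:  the closure (in the
ambient space) of `{x ∈ D : ψ x ≠ 0}`. -/
def spt {d : ℕ} (D : Set (Fin d → ℝ)) (ψ : ↥D → ℝ) : Set (Fin d → ℝ) :=
  closure (Subtype.val '' {x : ↥D | ψ x ≠ 0})

/-- A set `Ψ` of real-valued functions on `D ⊆ ℝ^d` is locally linearly
independent if, for every open `O ⊆ ℝ^d` with `O ∩ D ≠ ∅`, the functions of `Ψ`
that do not vanish identically on `O ∩ D` are linearly independent as functions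
on `O ∩ D`. -/
def LocallyLinIndep {d : ℕ} (D : Set (Fin d → ℝ)) (Ψ : Set (↥D → ℝ)) : Prop :=
  ∀ O : Set (Fin d → ℝ), IsOpen O → (O ∩ D).Nonempty →
    LinearIndependent ℝ
      (fun f : {f : ↥D → ℝ // f ∈ Ψ ∧ ¬ ∀ x : ↥D, (x : Fin d → ℝ) ∈ O → f x = 0} =>
        fun x : {x : ↥D // (x : Fin d → ℝ) ∈ O} => f.1 x.1)

end Hier


namespace Hier

/-- The intermediate hierarchical set `H^ℓ`:  pairs `(m, ψ)` with `m ≤ ℓ`,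
`ψ ∈ Ψ^m`, `supp ψ ⊆ Ω^m`, and `supp ψ ⊄ Ω^{m+1}` if `m < ℓ`, while
`supp ψ ≠ ∅` if `m = ℓ`. -/
def Hinter {d : ℕ} (D : Set (Fin d → ℝ)) (Ψ : ℕ → Set (↥D → ℝ))
    (Ωh : ℕ → Set (Fin d → ℝ)) (ℓ : ℕ) : Set (ℕ × (↥D → ℝ)) :=
  {w | w.1 ≤ ℓ ∧ w.2 ∈ Ψ w.1 ∧ spt D w.2 ⊆ Ωh w.1 ∧
      (w.1 < ℓ → ¬ spt D w.2 ⊆ Ωh (w.1 + 1)) ∧ (w.1 = ℓ → spt D w.2 ≠ ∅)}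

lemma eq_zero_of_spt_empty {d : ℕ} {D : Set (Fin d → ℝ)} {f : ↥D → ℝ}
    (h : spt D f = ∅) : f = 0 := by
  funext x
  by_contra hx
  have : (x : Fin d → ℝ) ∈ spt D f := subset_closure ⟨x, hx, rfl⟩
  simp [h] at this

lemma eq_zero_of_not_mem_spt {d : ℕ} {D : Set (Fin d → ℝ)} {f : ↥D → ℝ}
    {x : ↥D} (h : (x : Fin d → ℝ) ∉ spt D f) : f x = 0 := by
  by_contra hx
  exact h (subset_closure ⟨x, hx, rfl⟩)

lemma key_spt_subset {d : ℕ} {D : Set (Fin d → ℝ)} {Ψ' : Set (↥D → ℝ)}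
    (hLLI : LocallyLinIndep D Ψ') {Ω' : Set (Fin d → ℝ)} (hΩ' : IsClosed Ω')
    (c : (↥D → ℝ) →₀ ℝ) (hc : ↑c.support ⊆ Ψ')
    {ψ : ↥D → ℝ} (hsum : (c.sum fun f r => r • f) = ψ)
    (hψ : spt D ψ ⊆ Ω') {φ₀ : ↥D → ℝ} (hφ₀ : φ₀ ∈ c.support) :
    spt D φ₀ ⊆ Ω' := by
  classical
  intro y hy
  by_contra hyΩ
  have hOopen : IsOpen Ω'ᶜ := hΩ'.isOpen_compl
  obtain ⟨w, hwO, hwim⟩ := mem_closure_iff.mp hy Ω'ᶜ hOopen hyΩ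
  obtain ⟨z, hz, rfl⟩ := hwim
  have hne : (Ω'ᶜ ∩ D).Nonempty := ⟨z, hwO, z.2⟩
  have hli := hLLI Ω'ᶜ hOopen hne
  set P : (↥D → ℝ) → Prop :=
    fun f => ¬ ∀ x : ↥D, (x : Fin d → ℝ) ∈ Ω'ᶜ → f x = 0 with hP
  set S' := c.support.filter P with hS'
  have hφ₀S' : φ₀ ∈ S' :=
    Finset.mem_filter.mpr ⟨hφ₀, fun h => hz (h z hwO)⟩
  have hmemT : ∀ f ∈ S', f ∈ Ψ' ∧ P f := by
    intro f hf
    obtain ⟨h1, h2⟩ := Finset.mem_filter.mp hf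
    exact ⟨hc h1, h2⟩
  set e : {f // f ∈ S'} ↪ {f : ↥D → ℝ // f ∈ Ψ' ∧ P f} :=
    ⟨fun f => ⟨f.1, hmemT f.1 f.2⟩, by
      intro a b h
      apply Subtype.ext
      simpa using congrArg Subtype.val h⟩ with he
  set s := S'.attach.map e with hs
  have hzero :
      (∑ t ∈ s, c t.1 •
        (fun x : {x : ↥D // (x : Fin d → ℝ) ∈ Ω'ᶜ} => t.1 x.1)) = 0 := by
    rw [hs, Finset.sum_map]
    simp only [he, Function.Embedding.coeFn_mk]
    change (∑ f ∈ S'.attach, c f.1 •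
      (fun x : {x : ↥D // (x : Fin d → ℝ) ∈ Ω'ᶜ} => f.1 x.1)) = 0
    rw [Finset.sum_attach S' (fun f => c f •
      (fun x : {x : ↥D // (x : Fin d → ℝ) ∈ Ω'ᶜ} => f x.1))]
    funext x
    simp only [Finset.sum_apply, Pi.smul_apply, smul_eq_mul, Pi.zero_apply]
    have hfull : ∑ f ∈ S', c f * f x.1 = ∑ f ∈ c.support, c f * f x.1 := by
      rw [hS']
      refine Finset.sum_filter_of_ne ?_
      intro f _ hne hPf
      rw [hPf x.1 x.2, mul_zero] at hne
      exact hne rfl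
    rw [hfull]
    have : ∑ f ∈ c.support, c f * f x.1 = ψ x.1 := by
      rw [← hsum]
      rw [Finsupp.sum]
      rw [Finset.sum_apply]
      simp
    rw [this]
    refine eq_zero_of_not_mem_spt (fun hmem => ?_)
    exact x.2 (hψ hmem)
  have := linearIndependent_iff'.mp hli s (fun t => c t.1) hzero
    ⟨φ₀, hmemT φ₀ hφ₀S'⟩ ?_
  · exact Finsupp.mem_support_iff.mp hφ₀ this
  · rw [hs, Finset.mem_map]
    exact ⟨⟨φ₀, hφ₀S'⟩, Finset.mem_attach _ _, rfl⟩

/-- The intermediate spline spaces are nested: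
`span {ψ : (m,ψ) ∈ H^ℓ} ⊆ span {ψ : (m,ψ) ∈ H^{ℓ+1}}` for `ℓ = 0, …, N−2`. -/
theorem intermediate_spaces_nested {d : ℕ} (D : Set (Fin d → ℝ))
    (hD : IsClosed D) (N : ℕ) (hN : 1 ≤ N) (Ψ : ℕ → Set (↥D → ℝ))
    (hfin : ∀ ℓ < N, (Ψ ℓ).Finite)
    (hcont : ∀ ℓ < N, ∀ ψ ∈ Ψ ℓ, Continuous ψ)
    (hspan : ∀ ℓ, ℓ + 1 < N → Submodule.span ℝ (Ψ ℓ) ≤ Submodule.span ℝ (Ψ (ℓ + 1)))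
    (hLLI : ∀ ℓ < N, LocallyLinIndep D (Ψ ℓ))
    (Ωh : ℕ → Set (Fin d → ℝ)) (hΩ0 : Ωh 0 = D)
    (hclosed : ∀ ℓ < N, IsClosed (Ωh ℓ))
    (hanti : ∀ ℓ, ℓ + 1 < N → Ωh (ℓ + 1) ⊆ Ωh ℓ) :
    ∀ ℓ, ℓ + 1 < N →
      Submodule.span ℝ (Prod.snd '' Hinter D Ψ Ωh ℓ) ≤
        Submodule.span ℝ (Prod.snd '' Hinter D Ψ Ωh (ℓ + 1)) := by
  intro ℓ hℓ
  rw [Submodule.span_le]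
  rintro ψ ⟨⟨m, ψ⟩, ⟨hm, hΨ, hsub, hnest, hns⟩, rfl⟩
  simp only at hm hΨ hsub hnest hns ⊢
  rcases lt_or_eq_of_le hm with hmlt | rfl
  · -- m < ℓ : same pair works at level ℓ+1
    refine Submodule.subset_span ⟨(m, ψ), ⟨?_, hΨ, hsub, ?_, ?_⟩, rfl⟩
    · omega
    · intro _; exact hnest hmlt
    · intro h; omega
  · -- m = ℓ
    by_cases hcase : spt D ψ ⊆ Ωh (m + 1)
    · -- rewrite ψ in terms of Ψ (m+1)
      have hψspan : ψ ∈ Submodule.span ℝ (Ψ (m + 1)) :=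
        hspan m hℓ (Submodule.subset_span hΨ)
      obtain ⟨c, hc, hsum⟩ := Submodule.mem_span_set.mp hψspan
      rw [← hsum]
      refine Submodule.sum_mem _ ?_
      intro f hf
      refine Submodule.smul_mem _ _ ?_
      by_cases hf0 : spt D f = ∅
      · rw [eq_zero_of_spt_empty hf0]
        exact Submodule.zero_mem _
      · refine Submodule.subset_span ⟨(m + 1, f), ⟨le_refl _, hc hf, ?_, ?_, ?_⟩, rfl⟩
        · exact key_spt_subset (hLLI (m + 1) hℓ) (hclosed (m + 1) hℓ) c hc hsum
            hcase hf
        · intro h; omega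
        · intro _; exact hf0
    · refine Submodule.subset_span ⟨(m, ψ), ⟨?_, hΨ, hsub, ?_, ?_⟩, rfl⟩
      · omega
      · intro _; exact hcase
      · intro h; omega

end Hier
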